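/- Let δ ∈ (0, π/2), let c ∈ ℂ, and let F : ℂ → ℂ be entire with constants A, C > 0 such that |F(λ)| ≤ C exp(A·|λ|^{1/2}) for all λ ∈ ℂ. Suppose that F(ρ²) → c as |ρ| → ∞ with ρ ∈ Λ_δ, i.e., for every ε > 0 there is R > 0 such that |F(ρ²) − c| ≤ ε whenever ρ ∈ ℂ, δ ≤ arg ρ ≤ π − δ, and |ρ| ≥ R. Then F(λ) = c for all λ ∈ ℂ. -/

import Mathlib

open Complex

/-- Square root of the exponential. -/
private lemma sqrt_exp (t : ℝ) : Real.sqrt (Real.exp t) = Real.exp (t / 2) := by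
  rw [show Real.exp t = (Real.exp (t / 2)) ^ 2 by
    rw [sq, ← Real.exp_add]; ring_nf]
  exact Real.sqrt_sq (Real.exp_nonneg _)

/-- Phragmén–Lindelöf / Liouville lemma: an entire function `F`
of order at most `1/2` (growth `|F(λ)| ≤ C exp(A |λ|^{1/2})`) such that
`F(ρ²) → c` as `|ρ| → ∞` in the sector `Λ_δ = {ρ : δ ≤ arg ρ ≤ π - δ}`,
`0 < δ < π/2`, is identically equal to `c`. -/
theorem statement12
    (δ : ℝ) (hδ0 : 0 < δ) (hδ2 : δ < Real.pi / 2)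
    (c : ℂ) (F : ℂ → ℂ) (hF : Differentiable ℂ F)
    (A C : ℝ) (hA : 0 < A) (hC : 0 < C)
    (hb : ∀ lam : ℂ, ‖F lam‖ ≤ C * Real.exp (A * Real.sqrt ‖lam‖))
    (hlim : ∀ ε > (0:ℝ), ∃ R > (0:ℝ), ∀ ρ : ℂ,
      δ ≤ ρ.arg → ρ.arg ≤ Real.pi - δ → R ≤ ‖ρ‖ → ‖F (ρ ^ 2) - c‖ ≤ ε) :
    ∀ lam : ℂ, F lam = c := by
  obtain ⟨R, hR0, hR⟩ := hlim 1 one_pos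
  set M : ℝ := max (‖c‖ + 1) (C * Real.exp (A * R)) with hMdef
  have hδπ : δ ≤ Real.pi - δ := by linarith [Real.pi_pos]
  -- Any value of F at a square of a point in the sector is bounded by M.
  have key : ∀ ρ : ℂ, δ ≤ ρ.arg → ρ.arg ≤ Real.pi - δ → ‖F (ρ ^ 2)‖ ≤ M := by
    intro ρ h1 h2
    rcases le_or_gt R ‖ρ‖ with h | h
    · have := hR ρ h1 h2 h
      calc ‖F (ρ ^ 2)‖ = ‖(F (ρ ^ 2) - c) + c‖ := by ring_nf
        _ ≤ ‖F (ρ ^ 2) - c‖ + ‖c‖ := norm_add_le _ _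
        _ ≤ 1 + ‖c‖ := by linarith
        _ ≤ M := by rw [hMdef]; simp [add_comm]
    · refine le_trans (hb _) (le_max_of_le_right ?_)
      have hs : Real.sqrt ‖ρ ^ 2‖ = ‖ρ‖ := by
        rw [norm_pow, Real.sqrt_sq (norm_nonneg _)]
      rw [hs]
      have : A * ‖ρ‖ ≤ A * R := by nlinarith
      gcongr
  -- F is bounded on the sector |arg λ| ≤ 2δ via Phragmén–Lindelöf on a strip.
  have strip : ∀ w : ℂ, -(2*δ) ≤ w.im → w.im ≤ 2*δ → ‖F (Complex.exp w)‖ ≤ M := by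
    intro w hwa hwb
    have h2δπ : 2 * δ < Real.pi := by linarith
    -- boundary bound
    have hbnd : ∀ (w : ℂ) (s : ℝ), s = 2*δ ∨ s = -(2*δ) → w.im = s →
        ‖F (Complex.exp w)‖ ≤ M := by
      intro w s hs hw
      have him2 : (w/2).im = s/2 := by rw [Complex.div_im]; simp [hw]; ring
      have hrange : -Real.pi < (w/2).im ∧ (w/2).im ≤ Real.pi := by
        rcases hs with rfl | rfl <;> rw [him2] <;> constructor <;> nlinarith [Real.pi_pos]
      have harg : (Complex.exp (w/2)).arg = s/2 := by
        rw [← Complex.log_im (Complex.exp (w/2)), Complex.log_exp hrange.1 hrange.2, him2]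
      have hsq : Complex.exp (w/2) ^ 2 = Complex.exp w := by
        rw [sq, ← Complex.exp_add]; ring_nf
      rcases hs with rfl | rfl
      · -- arg = δ
        have := key (Complex.exp (w/2)) (by rw [harg]; linarith) (by rw [harg]; linarith)
        rwa [hsq] at this
      · -- arg = -δ, use -exp(w/2), with arg = π - δ
        have hneg : (Complex.exp (w/2)).im < 0 := by
          rw [← Complex.arg_neg_iff, harg]; linarith
        have harg' : (-Complex.exp (w/2)).arg = Real.pi - δ := by
          rw [Complex.arg_neg_eq_arg_add_pi_of_im_neg hneg, harg]; ring
        have := key (-Complex.exp (w/2)) (by rw [harg']; linarith) harg'.le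
        rwa [neg_pow, neg_one_sq, one_mul, hsq] at this
    refine PhragmenLindelof.horizontal_strip
      (f := fun w => F (Complex.exp w)) (a := -(2*δ)) (b := 2*δ)
      ((hF.comp Complex.differentiable_exp).diffContOnCl) ?_
      (fun z hz => hbnd z _ (Or.inr rfl) hz) (fun z hz => hbnd z _ (Or.inl rfl) hz) hwa hwb
    refine ⟨1/2, ?_, A, ?_⟩
    · rw [div_lt_div_iff₀ two_pos (by linarith : (0:ℝ) < 2*δ - -(2*δ))]
      nlinarith [Real.pi_pos]
    · refine Asymptotics.IsBigO.of_bound C (Filter.Eventually.of_forall fun z => ?_)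
      have h1 : ‖F (Complex.exp z)‖ ≤ C * Real.exp (A * Real.exp (z.re / 2)) := by
        have := hb (Complex.exp z)
        rwa [show ‖Complex.exp z‖ = Real.exp z.re from by
          rw [Complex.norm_exp], sqrt_exp] at this
      refine h1.trans ?_
      rw [Real.norm_eq_abs, Real.abs_exp]
      have : Real.exp (z.re / 2) ≤ Real.exp (1/2 * |z.re|) := by
        apply Real.exp_le_exp.2; rw [one_div, inv_mul_eq_div]
        gcongr
        exact le_abs_self _
      have hAC : A * Real.exp (z.re / 2) ≤ A * Real.exp (1/2 * |z.re|) := by nlinarith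
      nlinarith [Real.exp_le_exp.2 hAC, Real.exp_pos (A * Real.exp (z.re / 2))]
  -- F is bounded everywhere.
  have bdd : ∀ lam : ℂ, ‖F lam‖ ≤ M := by
    intro lam
    rcases eq_or_ne lam 0 with rfl | hlam
    · refine (hb 0).trans (le_max_of_le_right ?_)
      simp only [norm_zero, Real.sqrt_zero, mul_zero, Real.exp_zero, mul_one]
      have : (1:ℝ) ≤ Real.exp (A * R) := Real.one_le_exp (by positivity)
      nlinarith
    · rcases le_or_gt (|lam.arg|) (2*δ) with h | h
      · -- in the strip sector
        have := strip (Complex.log lam) (by rw [Complex.log_im]; cases abs_le.1 h; linarith)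
          (by rw [Complex.log_im]; exact (abs_le.1 h).2)
        rwa [Complex.exp_log hlam] at this
      · -- outside: square root lies in the sector (up to sign)
        set ρ := Complex.exp (Complex.log lam / 2) with hρ
        have him2 : (Complex.log lam / 2).im = lam.arg / 2 := by
          rw [Complex.div_im]; simp [Complex.log_im]; ring
        have hrange : -Real.pi < (Complex.log lam / 2).im ∧ (Complex.log lam / 2).im ≤ Real.pi := by
          rw [him2]
          constructor <;> nlinarith [Complex.neg_pi_lt_arg lam, Complex.arg_le_pi lam, Real.pi_pos]
        have harg : ρ.arg = lam.arg / 2 := by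
          rw [hρ, ← Complex.log_im (Complex.exp _), Complex.log_exp hrange.1 hrange.2, him2]
        have hsq : ρ ^ 2 = lam := by
          rw [hρ, sq, ← Complex.exp_add, show Complex.log lam / 2 + Complex.log lam / 2
            = Complex.log lam by ring, Complex.exp_log hlam]
        rcases lt_abs.1 h with h' | h'
        · -- arg lam > 2δ
          have := key ρ (by rw [harg]; linarith)
            (by rw [harg]; nlinarith [Complex.arg_le_pi lam, Real.pi_pos])
          rwa [hsq] at this
        · -- arg lam < -(2δ)
          have hneg : ρ.im < 0 := by
            rw [← Complex.arg_neg_iff, harg]; linarith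
          have harg' : (-ρ).arg = lam.arg / 2 + Real.pi :=
            Complex.arg_neg_eq_arg_add_pi_of_im_neg hneg |>.trans (by rw [harg])
          have := key (-ρ)
            (by rw [harg']; nlinarith [Complex.neg_pi_lt_arg lam, Real.pi_pos])
            (by rw [harg']; linarith)
          rwa [neg_pow, neg_one_sq, one_mul, hsq] at this
  -- Liouville: F is constant.
  have hbdd : Bornology.IsBounded (Set.range F) := by
    rw [Metric.isBounded_iff_subset_closedBall 0]
    refine ⟨M, ?_⟩
    rintro x ⟨lam, rfl⟩
    simpa [Metric.mem_closedBall, mem_closedBall_zero_iff] using bdd lam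
  have hconst : ∀ z w : ℂ, F z = F w := fun z w =>
    hF.apply_eq_apply_of_bounded hbdd z w
  intro lam
  -- Now show the constant value is c.
  have hle : ∀ ε > (0:ℝ), ‖F lam - c‖ ≤ ε := by
    intro ε hε
    obtain ⟨R', hR'0, hR'⟩ := hlim ε hε
    have hargI : ((R' : ℂ) * Complex.I).arg = Real.pi / 2 := by
      rw [Complex.arg_real_mul _ hR'0, Complex.arg_I]
    have hnorm : R' ≤ ‖(R' : ℂ) * Complex.I‖ := by
      simp [abs_of_pos hR'0]
    have := hR' ((R' : ℂ) * Complex.I) (by rw [hargI]; linarith)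
      (by rw [hargI]; linarith) hnorm
    rwa [← hconst lam (((R' : ℂ) * Complex.I) ^ 2)] at this
  have h0 : ‖F lam - c‖ ≤ 0 := by
    by_contra hcon
    push_neg at hcon
    have := hle (‖F lam - c‖ / 2) (by linarith)
    linarith
  have := le_antisymm h0 (norm_nonneg _)
  rwa [norm_eq_zero, sub_eq_zero] at this
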